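/- arXiv:1811.06189 — 2 statements merged into one kernel-verified Lean document; each statement's English description precedes it below -/
import Mathlib

section
/- If Γ is a move semigroup, then arblim(Γ), the smallest superset of Γ satisfying axiom (arblim), is also a move semigroup. -/
open Filter Set

noncomputable section

/-- The unrestricted translation (`b = false`) or reflection (`b = true`)
with parameter `p`: `x ↦ x + p`, resp. `x ↦ p - x`. -/
def uEval (b : Bool) (p : ℝ) (x : ℝ) : ℝ := if b then p - x else x + p

/-- A restricted move `γ|_D`: a translation (`isRefl = false`) or a
reflection (`isRefl = true`) together with a domain. -/
structure Move where
  isRefl : Bool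
  param : ℝ
  dom : Set ℝ

namespace Move

def eval (m : Move) : ℝ → ℝ := uEval m.isRefl m.param

/-- The character: `+1` for translations, `-1` for reflections. -/
def chi (m : Move) : ℝ := if m.isRefl then -1 else 1

def image (m : Move) : Set ℝ := m.eval '' m.dom

def graph (m : Move) : Set (ℝ × ℝ) := (fun x => (x, m.eval x)) '' m.dom

/-- Domains of moves must be open intervals or empty. -/
def ValidDom (D : Set ℝ) : Prop := IsOpen D ∧ D.OrdConnected

/-- A valid move: open-interval-or-empty domain; moves with empty domain are
normalized (`param = 0`), so that there are exactly two empty moves, one of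
each character. -/
def Valid (m : Move) : Prop := ValidDom m.dom ∧ (m.dom = ∅ → m.param = 0)

/-- The move `γ|_D` (normalized representative). -/
def mk' (b : Bool) (p : ℝ) (D : Set ℝ) : Move :=
  letI : Decidable (D = ∅) := Classical.dec _
  ⟨b, if D = ∅ then 0 else p, D⟩

/-- Composition of moves: `γ₂|_{D₂} ∘ γ₁|_{D₁} = (γ₂ ∘ γ₁)|_{D₁ ∩ γ₁⁻¹ D₂}`. -/
def comp (m2 m1 : Move) : Move :=
  mk' (m2.isRefl != m1.isRefl)
    (if m2.isRefl then m2.param - m1.param else m1.param + m2.param)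
    (m1.dom ∩ m1.eval ⁻¹' m2.dom)

/-- Inverse of a move: `(γ|_D)⁻¹ = γ⁻¹|_{γ(D)}`. -/
def inv (m : Move) : Move :=
  mk' m.isRefl (if m.isRefl then m.param else -m.param) (m.eval '' m.dom)

/-- The restriction partial order: `m1` is a restriction of `m2`. -/
def le (m1 m2 : Move) : Prop :=
  m1.isRefl = m2.isRefl ∧ m1.dom ⊆ m2.dom ∧ ∀ x ∈ m1.dom, m1.eval x = m2.eval x

end Move

/-- A move ensemble: a set of (valid) moves. -/
def IsMoveEnsemble (Ω : Set Move) : Prop := ∀ m ∈ Ω, m.Valid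

/-- A move semigroup: a move ensemble closed under composition and inverse. -/
def IsMoveSemigroup (Γ : Set Move) : Prop :=
  IsMoveEnsemble Γ ∧ (∀ m1 ∈ Γ, ∀ m2 ∈ Γ, Move.comp m2 m1 ∈ Γ) ∧
    (∀ m ∈ Γ, Move.inv m ∈ Γ)

/-- `⟨Ω⟩`: the smallest move semigroup containing `Ω`. -/
def semi (Ω : Set Move) : Set Move := ⋂₀ {Γ | IsMoveSemigroup Γ ∧ Ω ⊆ Γ}

/-- Axiom (restrict). -/
def RestrictClosed (Ω : Set Move) : Prop :=
  ∀ m ∈ Ω, ∀ D' : Set ℝ, D' ⊆ m.dom → Move.ValidDom D' →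
    Move.mk' m.isRefl m.param D' ∈ Ω

/-- The restriction closure of an ensemble. -/
def restrictCl (Ω : Set Move) : Set Move := ⋂₀ {Γ | RestrictClosed Γ ∧ Ω ⊆ Γ}

/-- Join-closed: restriction-closed and closed under continuation (joins). -/
def JoinClosed (Ω : Set Move) : Prop :=
  RestrictClosed Ω ∧
    ∀ (b : Bool) (p : ℝ) (J : Set (Set ℝ)), J.Nonempty →
      (∀ I ∈ J, Move.mk' b p I ∈ Ω) → (⋃₀ J).OrdConnected →
      Move.mk' b p (⋃₀ J) ∈ Ω

/-- `join(Ω)`: the smallest join-closed ensemble containing `Ω`. -/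
def joinCl (Ω : Set Move) : Set Move := ⋂₀ {Γ | JoinClosed Γ ∧ Ω ⊆ Γ}

/-- `joinsemi(Ω) = join(⟨Ω⟩)`: the joined move semigroup generated by `Ω`. -/
def joinsemi (Ω : Set Move) : Set Move := joinCl (semi Ω)

/-- `θ` respects the move `γ|_D`: `θ(γ(x)) = χ(γ)·θ(x) + c` on `D`. -/
def Respects (θ : ℝ → ℝ) (m : Move) : Prop :=
  ∃ c : ℝ, ∀ x ∈ m.dom, θ (m.eval x) = m.chi * θ x + c

/-- `θ` respects each move of the ensemble `Ω`. -/
def RespectsAll (θ : ℝ → ℝ) (Ω : Set Move) : Prop := ∀ m ∈ Ω, Respects θ m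

/-- All translation moves with graph contained in `O`. -/
def tMoves (O : Set (ℝ × ℝ)) : Set Move :=
  {m | m.isRefl = false ∧ m.Valid ∧ m.graph ⊆ O}

/-- All reflection moves with graph contained in `O`. -/
def rMoves (O : Set (ℝ × ℝ)) : Set Move :=
  {m | m.isRefl = true ∧ m.Valid ∧ m.graph ⊆ O}

/-- All moves with graph contained in `O`. -/
def movesIn (O : Set (ℝ × ℝ)) : Set Move := {m | m.Valid ∧ m.graph ⊆ O}

/-- Translation moves graph of an ensemble. -/
def grPlus (Ω : Set Move) : Set (ℝ × ℝ) :=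
  {q | ∃ m ∈ Ω, m.isRefl = false ∧ q ∈ m.graph}

/-- Reflection moves graph of an ensemble. -/
def grMinus (Ω : Set Move) : Set (ℝ × ℝ) :=
  {q | ∃ m ∈ Ω, m.isRefl = true ∧ q ∈ m.graph}

/-- `dom(O)`: union of the domains of the moves in `movesIn O`. -/
def domOf (O : Set (ℝ × ℝ)) : Set ℝ := {x | ∃ m ∈ movesIn O, x ∈ m.dom}

/-- `im(O)`: union of the images of the moves in `movesIn O`. -/
def imOf (O : Set (ℝ × ℝ)) : Set ℝ := {x | ∃ m ∈ movesIn O, x ∈ m.image}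

/-- domain of a move ensemble. -/
def domEns (Ω : Set Move) : Set ℝ := {x | ∃ m ∈ Ω, x ∈ m.dom}

/-- image of a move ensemble. -/
def imEns (Ω : Set Move) : Set ℝ := {x | ∃ m ∈ Ω, x ∈ m.image}

/-- Convergence of a sequence of unrestricted moves (character, parameter):
all but finitely many have character `b`, and the parameters tend to `p`. -/
def ConvergesTo (γ : ℕ → Bool × ℝ) (b : Bool) (p : ℝ) : Prop :=
  (∀ᶠ i in atTop, (γ i).1 = b) ∧ Tendsto (fun i => (γ i).2) atTop (nhds p)

/-- Axiom (lim): fixed-domain limits of moves. -/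
def LimClosed (Ω : Set Move) : Prop :=
  ∀ D : Set ℝ, Move.ValidDom D →
    ∀ (γ : ℕ → Bool × ℝ) (b : Bool) (p : ℝ), ConvergesTo γ b p →
      (∀ i, Move.mk' (γ i).1 (γ i).2 D ∈ Ω) → Move.mk' b p D ∈ Ω

/-- `lim(Ω)`: the smallest superset of `Ω` satisfying (lim). -/
def limCl (Ω : Set Move) : Set Move := ⋂₀ {Γ | LimClosed Γ ∧ Ω ⊆ Γ}

/-- Axiom (arblim): limits of moves with converging domains. -/
def ArbLimClosed (Ω : Set Move) : Prop :=
  ∀ (γ : ℕ → Bool × ℝ) (b : Bool) (p : ℝ) (l u : ℕ → ℝ) (l₀ u₀ : ℝ),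
    ConvergesTo γ b p → Tendsto l atTop (nhds l₀) → Tendsto u atTop (nhds u₀) →
    (∀ i, Move.mk' (γ i).1 (γ i).2 (Set.Ioo (l i) (u i)) ∈ Ω) →
    Move.mk' b p (Set.Ioo l₀ u₀) ∈ Ω

/-- `arblim(Ω)`: the smallest superset of `Ω` satisfying (arblim). -/
def arblimCl (Ω : Set Move) : Set Move := ⋂₀ {Γ | ArbLimClosed Γ ∧ Ω ⊆ Γ}

/-- Axiom (kaleido). -/
def Kaleidoscopic (Ω : Set Move) : Prop :=
  ∀ D I : Set ℝ, Move.ValidDom D → Move.ValidDom I →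
    (tMoves (D ×ˢ I) ⊆ Ω ↔ rMoves (D ×ˢ I) ⊆ Ω)

/-- Axiom (extend_A): continuous domain extension relative to the open set `A`. -/
def ExtendClosed (A : Set ℝ) (Ω : Set Move) : Prop :=
  ∀ (b : Bool) (p : ℝ) (J : Set (Set ℝ)) (D : Set ℝ), J.Nonempty →
    (∀ I ∈ J, Move.mk' b p I ∈ Ω) → Move.ValidDom D →
    D ⊆ closure (⋃₀ J) ∩ A ∩ uEval b p ⁻¹' A →
    Move.mk' b p D ∈ Ω

/-- `joinextend_A(Ω)`: the smallest superset of `Ω` satisfying (extend_A). -/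
def joinExtendCl (A : Set ℝ) (Ω : Set Move) : Set Move :=
  ⋂₀ {Γ | ExtendClosed A Γ ∧ Ω ⊆ Γ}

/-- A closed move semigroup with respect to the open set `A`. -/
def ClosedMoveSemigroup (A : Set ℝ) (Γ : Set Move) : Prop :=
  IsMoveSemigroup Γ ∧ JoinClosed Γ ∧ Kaleidoscopic Γ ∧ LimClosed Γ ∧
    ExtendClosed A Γ

/-- The moves closure `ctscl(Ω)`: the smallest closed move semigroup
(with respect to `A`) containing `Ω`. -/
def ctscl (A : Set ℝ) (Ω : Set Move) : Set Move :=
  ⋂₀ {Γ | ClosedMoveSemigroup A Γ ∧ Ω ⊆ Γ}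

/-- The set of maximal elements of `Ω` in the restriction partial order. -/
def MaxOf (Ω : Set Move) : Set Move :=
  {m ∈ Ω | ∀ m' ∈ Ω, Move.le m m' → Move.le m' m}

section ArbAux

variable {Γ : Set Move}

lemma mk'_isRefl (b : Bool) (p : ℝ) (D : Set ℝ) : (Move.mk' b p D).isRefl = b := rfl

lemma mk'_dom (b : Bool) (p : ℝ) (D : Set ℝ) : (Move.mk' b p D).dom = D := rfl

lemma mk'_param_of_ne (b : Bool) (p : ℝ) {D : Set ℝ} (h : D ≠ ∅) :
    (Move.mk' b p D).param = p := by
  simp [Move.mk', h]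

lemma mk'_congr (b : Bool) {p p' : ℝ} {D D' : Set ℝ} (hD : D = D')
    (hp : D ≠ ∅ → p = p') : Move.mk' b p D = Move.mk' b p' D' := by
  subst hD
  by_cases h : D = ∅
  · simp [Move.mk', h]
  · simp [Move.mk', h, hp h]

lemma mk'_valid (b : Bool) (p : ℝ) {D : Set ℝ} (hD : Move.ValidDom D) :
    (Move.mk' b p D).Valid := by
  refine ⟨hD, fun h => ?_⟩
  rw [mk'_dom] at h
  simp [Move.mk', h]

lemma subset_arblimCl : Γ ⊆ arblimCl Γ :=
  Set.subset_sInter fun _ h => h.2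

lemma arblimCl_closed : ArbLimClosed (arblimCl Γ) := by
  intro γ b p l u l₀ u₀ hγ hl hu hmem
  exact Set.mem_sInter.2 fun Γ0 hΓ0 =>
    hΓ0.1 γ b p l u l₀ u₀ hγ hl hu fun i => Set.mem_sInter.1 (hmem i) Γ0 hΓ0

lemma arblimCl_min {Γ0 : Set Move} (h1 : ArbLimClosed Γ0) (h2 : Γ ⊆ Γ0) :
    arblimCl Γ ⊆ Γ0 :=
  Set.sInter_subset_of_mem ⟨h1, h2⟩

lemma arblimCl_ensemble (hΓ : IsMoveEnsemble Γ) : IsMoveEnsemble (arblimCl Γ) := by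
  have hsub : arblimCl Γ ⊆ {m | m.Valid} :=
    arblimCl_min (fun γ b p l u l₀ u₀ _ _ _ _ =>
      mk'_valid b p ⟨isOpen_Ioo, Set.ordConnected_Ioo⟩) hΓ
  exact fun m hm => hsub hm

end ArbAux

section ArbAux2

lemma not_open_sub_Ici {s : Set ℝ} {a : ℝ} (ho : IsOpen s) (ha : a ∈ s)
    (hs : s ⊆ Set.Ici a) : False := by
  have h := interior_mono hs
  rw [ho.interior_eq, interior_Ici] at h
  exact lt_irrefl a (h ha)

lemma not_open_sub_Iic {s : Set ℝ} {a : ℝ} (ho : IsOpen s) (ha : a ∈ s)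
    (hs : s ⊆ Set.Iic a) : False := by
  have h := interior_mono hs
  rw [ho.interior_eq, interior_Iic] at h
  exact lt_irrefl a (h ha)

lemma validDom_cases {D : Set ℝ} (hD : Move.ValidDom D) :
    D = ∅ ∨ D = Set.univ ∨ (∃ a, D = Set.Ioi a) ∨ (∃ a, D = Set.Iio a) ∨
      ∃ a b, D = Set.Ioo a b := by
  obtain ⟨ho, hc⟩ := hD
  by_cases hne : D = ∅
  · exact Or.inl hne
  have hDne : D.Nonempty := Set.nonempty_iff_ne_empty.2 hne
  have hmem := hc.isPreconnected.mem_intervals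
  simp only [Set.mem_insert_iff, Set.mem_singleton_iff] at hmem
  rcases hmem with h|h|h|h|h|h|h|h|h|h
  · exfalso
    obtain ⟨a, b, h⟩ : ∃ a b, D = Set.Icc a b := ⟨_, _, h⟩
    subst h
    exact not_open_sub_Ici ho (Set.left_mem_Icc.2 (Set.nonempty_Icc.1 hDne))
      Set.Icc_subset_Ici_self
  · exfalso
    obtain ⟨a, b, h⟩ : ∃ a b, D = Set.Ico a b := ⟨_, _, h⟩
    subst h
    exact not_open_sub_Ici ho (Set.left_mem_Ico.2 (Set.nonempty_Ico.1 hDne))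
      Set.Ico_subset_Ici_self
  · exfalso
    obtain ⟨a, b, h⟩ : ∃ a b, D = Set.Ioc a b := ⟨_, _, h⟩
    subst h
    exact not_open_sub_Iic ho (Set.right_mem_Ioc.2 (Set.nonempty_Ioc.1 hDne))
      Set.Ioc_subset_Iic_self
  · exact Or.inr (Or.inr (Or.inr (Or.inr ⟨_, _, h⟩)))
  · exfalso
    obtain ⟨a, h⟩ : ∃ a, D = Set.Ici a := ⟨_, h⟩
    subst h
    exact not_open_sub_Ici ho Set.self_mem_Ici subset_rfl
  · exact Or.inr (Or.inr (Or.inl ⟨_, h⟩))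
  · exfalso
    obtain ⟨a, h⟩ : ∃ a, D = Set.Iic a := ⟨_, h⟩
    subst h
    exact not_open_sub_Iic ho Set.self_mem_Iic subset_rfl
  · exact Or.inr (Or.inr (Or.inr (Or.inl ⟨_, h⟩)))
  · exact Or.inr (Or.inl h)
  · exact absurd h hne

lemma validDom_inter_Ioo {D : Set ℝ} (hD : Move.ValidDom D) :
    ∃ f g : ℝ → ℝ → ℝ,
      Continuous (fun q : ℝ × ℝ => f q.1 q.2) ∧
      Continuous (fun q : ℝ × ℝ => g q.1 q.2) ∧
      ∀ α β, D ∩ Set.Ioo α β = Set.Ioo (f α β) (g α β) := by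
  rcases validDom_cases hD with h|h|⟨a,h⟩|⟨a,h⟩|⟨a,b,h⟩ <;> subst h
  · exact ⟨fun _ _ => 0, fun _ _ => 0, continuous_const, continuous_const, by simp⟩
  · exact ⟨fun α _ => α, fun _ β => β, continuous_fst, continuous_snd, by simp⟩
  · refine ⟨fun α _ => max a α, fun _ β => β, continuous_const.max continuous_fst,
      continuous_snd, fun α β => ?_⟩
    ext x; simp only [Set.mem_inter_iff, Set.mem_Ioi, Set.mem_Ioo, max_lt_iff]; tauto
  · refine ⟨fun α _ => α, fun _ β => min a β, continuous_fst,
      continuous_const.min continuous_snd, fun α β => ?_⟩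
    ext x; simp only [Set.mem_inter_iff, Set.mem_Iio, Set.mem_Ioo, lt_min_iff]; tauto
  · refine ⟨fun α _ => max a α, fun _ β => min b β, continuous_const.max continuous_fst,
      continuous_const.min continuous_snd, fun α β => ?_⟩
    ext x
    simp only [Set.mem_inter_iff, Set.mem_Ioo, max_lt_iff, lt_min_iff]; tauto

end ArbAux2
section ArbAux3

lemma uEval_false (q : ℝ) : uEval false q = fun x => x + q := by
  funext x; simp [uEval]

lemma uEval_true (q : ℝ) : uEval true q = fun x => q - x := by
  funext x; simp [uEval]

lemma uEval_preimage_Ioo (c : Bool) (q l u : ℝ) :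
    uEval c q ⁻¹' Set.Ioo l u =
      Set.Ioo (if c then q - u else l - q) (if c then q - l else u - q) := by
  cases c
  · rw [uEval_false]
    simp only [Bool.false_eq_true, if_false]
    exact Set.preimage_add_const_Ioo q l u
  · rw [uEval_true]
    simp only [if_true]
    exact Set.preimage_const_sub_Ioo q l u

lemma uEval_image_Ioo (c : Bool) (q l u : ℝ) :
    uEval c q '' Set.Ioo l u =
      Set.Ioo (if c then q - u else l + q) (if c then q - l else u + q) := by
  cases c
  · rw [uEval_false]
    simp only [Bool.false_eq_true, if_false]
    exact Set.image_add_const_Ioo q l u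
  · rw [uEval_true]
    simp only [if_true]
    exact Set.image_const_sub_Ioo q l u

lemma inv_mk'_Ioo (b : Bool) (p l u : ℝ) :
    (Move.mk' b p (Set.Ioo l u)).inv =
      Move.mk' b (if b then p else -p)
        (Set.Ioo (if b then p - u else l + p) (if b then p - l else u + p)) := by
  by_cases h : Set.Ioo l u = (∅ : Set ℝ)
  · have hul : ¬ l < u := fun hlt => (Set.nonempty_Ioo.2 hlt).ne_empty h
    have h2 : Set.Ioo (if b then p - u else l + p) (if b then p - l else u + p)
        = (∅ : Set ℝ) := by
      cases b <;> simp only [if_true, if_false, Bool.false_eq_true] <;>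
        exact Set.Ioo_eq_empty (by intro hc; exact hul (by linarith))
    rw [h, h2]
    show Move.mk' b _ ((Move.mk' b p ∅).eval '' (∅ : Set ℝ)) = Move.mk' b _ (∅ : Set ℝ)
    rw [Set.image_empty]
    exact mk'_congr b rfl (fun hne => absurd rfl hne)
  · have hp : (Move.mk' b p (Set.Ioo l u)).param = p := mk'_param_of_ne b p h
    show Move.mk' b _ ((Move.mk' b p (Set.Ioo l u)).eval '' Set.Ioo l u) = _
    rw [Move.eval, mk'_isRefl, hp, uEval_image_Ioo]

lemma comp_mk'_left (m1 : Move) (f g : ℝ → ℝ → ℝ)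
    (hfg : ∀ α β, m1.dom ∩ Set.Ioo α β = Set.Ioo (f α β) (g α β))
    (bb : Bool) (pp l u : ℝ) :
    Move.comp (Move.mk' bb pp (Set.Ioo l u)) m1 =
      Move.mk' (bb != m1.isRefl) (if bb then pp - m1.param else m1.param + pp)
        (Set.Ioo (f (if m1.isRefl then m1.param - u else l - m1.param)
                    (if m1.isRefl then m1.param - l else u - m1.param))
                 (g (if m1.isRefl then m1.param - u else l - m1.param)
                    (if m1.isRefl then m1.param - l else u - m1.param))) := by
  have hdom : m1.dom ∩ m1.eval ⁻¹' (Move.mk' bb pp (Set.Ioo l u)).dom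
      = Set.Ioo (f (if m1.isRefl then m1.param - u else l - m1.param)
                   (if m1.isRefl then m1.param - l else u - m1.param))
                (g (if m1.isRefl then m1.param - u else l - m1.param)
                   (if m1.isRefl then m1.param - l else u - m1.param)) := by
    rw [mk'_dom, Move.eval, uEval_preimage_Ioo]
    exact hfg _ _
  show Move.mk' _ _ _ = _
  refine mk'_congr _ hdom fun hne => ?_
  obtain ⟨x, hx⟩ := Set.nonempty_iff_ne_empty.2 hne
  have hIoo : Set.Ioo l u ≠ (∅ : Set ℝ) :=
    Set.nonempty_iff_ne_empty.1 ⟨m1.eval x, hx.2⟩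
  rw [mk'_isRefl, mk'_param_of_ne bb pp hIoo]

lemma Ioo_inter_preimage (D2 : Set ℝ) (f g : ℝ → ℝ → ℝ)
    (hfg : ∀ α β, D2 ∩ Set.Ioo α β = Set.Ioo (f α β) (g α β))
    (cc : Bool) (t l u : ℝ) :
    Set.Ioo l u ∩ uEval cc t ⁻¹' D2 =
      Set.Ioo (if cc then t - g (t - u) (t - l) else f (l + t) (u + t) - t)
              (if cc then t - f (t - u) (t - l) else g (l + t) (u + t) - t) := by
  cases cc
  · simp only [Bool.false_eq_true, if_false]
    ext x
    have h := Set.ext_iff.1 (hfg (l + t) (u + t)) (x + t)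
    simp only [Set.mem_inter_iff, Set.mem_Ioo, Set.mem_preimage, uEval,
      Bool.false_eq_true, if_false] at h ⊢
    constructor
    · rintro ⟨⟨h1, h2⟩, h3⟩
      obtain ⟨h4, h5⟩ := h.1 ⟨h3, by linarith, by linarith⟩
      exact ⟨by linarith, by linarith⟩
    · rintro ⟨h1, h2⟩
      obtain ⟨h3, h4, h5⟩ := h.2 ⟨by linarith, by linarith⟩
      exact ⟨⟨by linarith, by linarith⟩, h3⟩
  · simp only [if_true]
    ext x
    have h := Set.ext_iff.1 (hfg (t - u) (t - l)) (t - x)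
    simp only [Set.mem_inter_iff, Set.mem_Ioo, Set.mem_preimage, uEval, if_true] at h ⊢
    constructor
    · rintro ⟨⟨h1, h2⟩, h3⟩
      obtain ⟨h4, h5⟩ := h.1 ⟨h3, by linarith, by linarith⟩
      exact ⟨by linarith, by linarith⟩
    · rintro ⟨h1, h2⟩
      obtain ⟨h3, h4, h5⟩ := h.2 ⟨by linarith, by linarith⟩
      exact ⟨⟨by linarith, by linarith⟩, h3⟩

lemma comp_mk'_right (m2 : Move) (f g : ℝ → ℝ → ℝ)
    (hfg : ∀ α β, m2.dom ∩ Set.Ioo α β = Set.Ioo (f α β) (g α β))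
    (cc : Bool) (qq l u : ℝ) :
    Move.comp m2 (Move.mk' cc qq (Set.Ioo l u)) =
      Move.mk' (m2.isRefl != cc) (if m2.isRefl then m2.param - qq else qq + m2.param)
        (Set.Ioo (if cc then qq - g (qq - u) (qq - l) else f (l + qq) (u + qq) - qq)
                 (if cc then qq - f (qq - u) (qq - l) else g (l + qq) (u + qq) - qq)) := by
  show Move.mk' _ _ ((Move.mk' cc qq (Set.Ioo l u)).dom ∩
      (Move.mk' cc qq (Set.Ioo l u)).eval ⁻¹' m2.dom) = _
  refine mk'_congr _ ?_ ?_
  · rw [mk'_dom]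
    by_cases h : Set.Ioo l u = (∅ : Set ℝ)
    · rw [← Ioo_inter_preimage m2.dom f g hfg cc qq l u, h]
      simp
    · rw [Move.eval, mk'_isRefl, mk'_param_of_ne cc qq h]
      exact Ioo_inter_preimage m2.dom f g hfg cc qq l u
  · intro hne
    obtain ⟨x, hx⟩ := Set.nonempty_iff_ne_empty.2 hne
    have hIoo : Set.Ioo l u ≠ (∅ : Set ℝ) := Set.nonempty_iff_ne_empty.1 ⟨x, hx.1⟩
    rw [mk'_param_of_ne cc qq hIoo]

end ArbAux3
section ArbAux4

variable {Γ : Set Move}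

lemma tendsto_ifγ {γ : ℕ → Bool × ℝ} {b : Bool} (hev : ∀ᶠ i in atTop, (γ i).1 = b)
    {A B : ℕ → ℝ} {A₀ B₀ : ℝ} (hA : Tendsto A atTop (nhds A₀))
    (hB : Tendsto B atTop (nhds B₀)) :
    Tendsto (fun i => if (γ i).1 then A i else B i) atTop
      (nhds (if b then A₀ else B₀)) := by
  have h1 : Tendsto (fun i => if b then A i else B i) atTop
      (nhds (if b then A₀ else B₀)) := by
    cases b
    · simpa using hB
    · simpa using hA
  exact Filter.Tendsto.congr' (hev.mono fun i hi => by simp [hi]) h1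

lemma tendsto_ifc (c : Bool) {A B : ℕ → ℝ} {A₀ B₀ : ℝ}
    (hA : Tendsto A atTop (nhds A₀)) (hB : Tendsto B atTop (nhds B₀)) :
    Tendsto (fun i => if c then A i else B i) atTop (nhds (if c then A₀ else B₀)) := by
  cases c
  · simpa using hB
  · simpa using hA

lemma arblimCl_inv (hΓ : IsMoveSemigroup Γ) :
    ∀ m ∈ arblimCl Γ, m.inv ∈ arblimCl Γ := by
  have hsub : arblimCl Γ ⊆ {m | m.inv ∈ arblimCl Γ} := by
    apply arblimCl_min
    · intro γ b p l u l₀ u₀ hγ hl hu hmem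
      simp only [Set.mem_setOf_eq, inv_mk'_Ioo] at hmem ⊢
      exact arblimCl_closed
        (fun i => ((γ i).1, if (γ i).1 then (γ i).2 else -(γ i).2)) b
        (if b then p else -p)
        (fun i => if (γ i).1 then (γ i).2 - u i else l i + (γ i).2)
        (fun i => if (γ i).1 then (γ i).2 - l i else u i + (γ i).2)
        _ _
        ⟨hγ.1, tendsto_ifγ hγ.1 hγ.2 hγ.2.neg⟩
        (tendsto_ifγ hγ.1 (hγ.2.sub hu) (hl.add hγ.2))
        (tendsto_ifγ hγ.1 (hγ.2.sub hl) (hu.add hγ.2))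
        hmem
    · exact fun m hm => subset_arblimCl (hΓ.2.2 m hm)
  exact fun m hm => hsub hm

lemma arblimCl_compA (hΓ : IsMoveSemigroup Γ) :
    ∀ m2 ∈ arblimCl Γ, ∀ m1 ∈ Γ, Move.comp m2 m1 ∈ arblimCl Γ := by
  have hsub : arblimCl Γ ⊆ {m2 | ∀ m1 ∈ Γ, Move.comp m2 m1 ∈ arblimCl Γ} := by
    apply arblimCl_min
    · intro γ b p l u l₀ u₀ hγ hl hu hmem m1 hm1
      obtain ⟨f, g, hf, hg, hfg⟩ := validDom_inter_Ioo (hΓ.1 m1 hm1).1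
      simp only [Set.mem_setOf_eq] at hmem
      have hA : Tendsto
          (fun i => if m1.isRefl then m1.param - u i else l i - m1.param) atTop
          (nhds (if m1.isRefl then m1.param - u₀ else l₀ - m1.param)) :=
        tendsto_ifc _ (tendsto_const_nhds.sub hu) (hl.sub tendsto_const_nhds)
      have hB : Tendsto
          (fun i => if m1.isRefl then m1.param - l i else u i - m1.param) atTop
          (nhds (if m1.isRefl then m1.param - l₀ else u₀ - m1.param)) :=
        tendsto_ifc _ (tendsto_const_nhds.sub hl) (hu.sub tendsto_const_nhds)
      have hAB := hA.prodMk_nhds hB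
      rw [comp_mk'_left m1 f g hfg b p l₀ u₀]
      refine arblimCl_closed
        (fun i => ((γ i).1 != m1.isRefl,
          if (γ i).1 then (γ i).2 - m1.param else m1.param + (γ i).2))
        (b != m1.isRefl) (if b then p - m1.param else m1.param + p)
        (fun i => f (if m1.isRefl then m1.param - u i else l i - m1.param)
                    (if m1.isRefl then m1.param - l i else u i - m1.param))
        (fun i => g (if m1.isRefl then m1.param - u i else l i - m1.param)
                    (if m1.isRefl then m1.param - l i else u i - m1.param))
        _ _
        ⟨hγ.1.mono fun i hi => by simp [hi],
          tendsto_ifγ hγ.1 (hγ.2.sub tendsto_const_nhds) (tendsto_const_nhds.add hγ.2)⟩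
        ((hf.tendsto _).comp hAB) ((hg.tendsto _).comp hAB)
        (fun i => by
          have h := (hmem i) m1 hm1
          rwa [comp_mk'_left m1 f g hfg (γ i).1 (γ i).2 (l i) (u i)] at h)
    · exact fun m2 hm2 m1 hm1 => subset_arblimCl (hΓ.2.1 m1 hm1 m2 hm2)
  exact fun m2 hm2 => hsub hm2

lemma arblimCl_compB (hΓ : IsMoveSemigroup Γ) :
    ∀ m1 ∈ arblimCl Γ, ∀ m2 ∈ arblimCl Γ, Move.comp m2 m1 ∈ arblimCl Γ := by
  have hsub : arblimCl Γ ⊆ {m1 | ∀ m2 ∈ arblimCl Γ, Move.comp m2 m1 ∈ arblimCl Γ} := by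
    apply arblimCl_min
    · intro γ b p l u l₀ u₀ hγ hl hu hmem m2 hm2
      obtain ⟨f, g, hf, hg, hfg⟩ :=
        validDom_inter_Ioo (arblimCl_ensemble hΓ.1 m2 hm2).1
      simp only [Set.mem_setOf_eq] at hmem
      have hA : Tendsto (fun i => (γ i).2 - g ((γ i).2 - u i) ((γ i).2 - l i)) atTop
          (nhds (p - g (p - u₀) (p - l₀))) :=
        hγ.2.sub ((hg.tendsto _).comp ((hγ.2.sub hu).prodMk_nhds (hγ.2.sub hl)))
      have hA' : Tendsto (fun i => (γ i).2 - f ((γ i).2 - u i) ((γ i).2 - l i)) atTop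
          (nhds (p - f (p - u₀) (p - l₀))) :=
        hγ.2.sub ((hf.tendsto _).comp ((hγ.2.sub hu).prodMk_nhds (hγ.2.sub hl)))
      have hB : Tendsto (fun i => f (l i + (γ i).2) (u i + (γ i).2) - (γ i).2) atTop
          (nhds (f (l₀ + p) (u₀ + p) - p)) :=
        ((hf.tendsto _).comp ((hl.add hγ.2).prodMk_nhds (hu.add hγ.2))).sub hγ.2
      have hB' : Tendsto (fun i => g (l i + (γ i).2) (u i + (γ i).2) - (γ i).2) atTop
          (nhds (g (l₀ + p) (u₀ + p) - p)) :=
        ((hg.tendsto _).comp ((hl.add hγ.2).prodMk_nhds (hu.add hγ.2))).sub hγ.2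
      rw [comp_mk'_right m2 f g hfg b p l₀ u₀]
      refine arblimCl_closed
        (fun i => (m2.isRefl != (γ i).1,
          if m2.isRefl then m2.param - (γ i).2 else (γ i).2 + m2.param))
        (m2.isRefl != b) (if m2.isRefl then m2.param - p else p + m2.param)
        (fun i => if (γ i).1 then (γ i).2 - g ((γ i).2 - u i) ((γ i).2 - l i)
                  else f (l i + (γ i).2) (u i + (γ i).2) - (γ i).2)
        (fun i => if (γ i).1 then (γ i).2 - f ((γ i).2 - u i) ((γ i).2 - l i)
                  else g (l i + (γ i).2) (u i + (γ i).2) - (γ i).2)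
        _ _
        ⟨hγ.1.mono fun i hi => by simp [hi],
          tendsto_ifc _ (tendsto_const_nhds.sub hγ.2) (hγ.2.add tendsto_const_nhds)⟩
        (tendsto_ifγ hγ.1 hA hB) (tendsto_ifγ hγ.1 hA' hB')
        (fun i => by
          have h := (hmem i) m2 hm2
          rwa [comp_mk'_right m2 f g hfg (γ i).1 (γ i).2 (l i) (u i)] at h)
    · exact fun m1 hm1 m2 hm2 => arblimCl_compA hΓ m2 hm2 m1 hm1
  exact fun m1 hm1 => hsub hm1

end ArbAux4

/-- The (arblim)-closure of a move semigroup is a move semigroup. -/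
theorem arblimCl_isMoveSemigroup (Γ : Set Move) (hΓ : IsMoveSemigroup Γ) :
    IsMoveSemigroup (arblimCl Γ) := by
  exact ⟨arblimCl_ensemble hΓ.1, arblimCl_compB hΓ, arblimCl_inv hΓ⟩
end
end

section
/- A join-closed move ensemble Ω^∨ is equal to the restriction closure of its set Max(Ω^∨) of maximal elements in the restriction partial order, and also equal to the joined ensemble of Max(Ω^∨): Ω^∨ = restrict(Max(Ω^∨)) = join(Max(Ω^∨)). -/
open Filter Set

noncomputable section

lemma uEval_param_eq {b : Bool} {p q x : ℝ} (h : uEval b p x = uEval b q x) :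
    p = q := by
  cases b <;> simp [uEval] at h <;> linarith

lemma mk'_of_nonempty (b : Bool) (p : ℝ) {D : Set ℝ} (hD : D.Nonempty) :
    Move.mk' b p D = ⟨b, p, D⟩ := by
  simp [Move.mk', hD.ne_empty]

lemma mk'_of_empty (b : Bool) (p : ℝ) :
    Move.mk' b p (∅ : Set ℝ) = ⟨b, 0, ∅⟩ := by
  simp [Move.mk']

lemma mk'_self (m : Move) (h : m.dom = ∅ → m.param = 0) :
    Move.mk' m.isRefl m.param m.dom = m := by
  by_cases hd : m.dom = ∅
  · rw [hd, mk'_of_empty]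
    obtain ⟨b, p, D⟩ := m
    simp only at hd h ⊢
    rw [hd, h hd]
  · rw [mk'_of_nonempty _ _ (Set.nonempty_iff_ne_empty.mpr hd)]

lemma exists_max_ext_ne (Ω : Set Move) (hΩ : IsMoveEnsemble Ω)
    (hjoin : JoinClosed Ω) (m : Move) (hm : m ∈ Ω) (hne : m.dom.Nonempty) :
    ∃ M ∈ MaxOf Ω, Move.le m M ∧ M.isRefl = m.isRefl := by
  obtain ⟨x0, hx0⟩ := hne
  set b := m.isRefl with hb
  set p := m.param with hp
  set J : Set (Set ℝ) := {I | Move.mk' b p I ∈ Ω ∧ m.dom ⊆ I} with hJ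
  have hmJ : m.dom ∈ J := by
    constructor
    · rw [hb, hp, mk'_self m (fun h => absurd h (Set.nonempty_iff_ne_empty.mp ⟨x0, hx0⟩))]
      exact hm
    · exact subset_rfl
  have hIconn : ∀ I ∈ J, I.OrdConnected := by
    intro I hI
    exact (hΩ _ hI.1).1.2
  have hconn : (⋃₀ J).OrdConnected := by
    constructor
    rintro x ⟨I, hI, hxI⟩ y ⟨I', hI', hyI'⟩ z hz
    rcases le_total z x0 with h | h
    · exact ⟨I, hI, (hIconn I hI).out hxI (hI.2 hx0) ⟨hz.1, h⟩⟩
    · exact ⟨I', hI', (hIconn I' hI').out (hI'.2 hx0) hyI' ⟨h, hz.2⟩⟩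
  have hMΩ : Move.mk' b p (⋃₀ J) ∈ Ω :=
    hjoin.2 b p J ⟨m.dom, hmJ⟩ (fun I hI => hI.1) hconn
  set M := Move.mk' b p (⋃₀ J) with hM
  have hUne : (⋃₀ J).Nonempty := ⟨x0, m.dom, hmJ, hx0⟩
  have hMeq : M = ⟨b, p, ⋃₀ J⟩ := mk'_of_nonempty b p hUne
  have hMdom : M.dom = ⋃₀ J := by rw [hMeq]
  have hMrefl : M.isRefl = b := by rw [hMeq]
  have hMparam : M.param = p := by rw [hMeq]
  have hMeval : ∀ x, M.eval x = uEval b p x := by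
    intro x; rw [Move.eval, hMrefl, hMparam]
  have hmsub : m.dom ⊆ M.dom := by
    rw [hMdom]; exact Set.subset_sUnion_of_mem hmJ
  have hx0M : x0 ∈ M.dom := hmsub hx0
  refine ⟨M, ⟨hMΩ, ?_⟩, ⟨hb.symm ▸ hMrefl.symm ▸ rfl, hmsub, fun x _ => by
    rw [hMeval, Move.eval, hb, hp]⟩, hMrefl⟩
  intro m' hm' hle
  obtain ⟨hr, hsub, hev⟩ := hle
  have hrefl' : m'.isRefl = b := by rw [← hr, hMrefl]
  have hparam' : m'.param = p := by
    have h := hev x0 hx0M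
    rw [hMeval, Move.eval, hrefl'] at h
    exact (uEval_param_eq h.symm)
  have hdomne' : m'.dom.Nonempty := ⟨x0, hsub hx0M⟩
  have hm'eq : Move.mk' b p m'.dom = m' := by
    rw [mk'_of_nonempty b p hdomne']
    obtain ⟨b', p', D'⟩ := m'
    simp only at hrefl' hparam'
    rw [hrefl', hparam']
  have hm'J : m'.dom ∈ J := ⟨hm'eq ▸ hm', hmsub.trans hsub⟩
  refine ⟨hr.symm, ?_, fun x hx => ?_⟩
  · rw [hMdom]; exact Set.subset_sUnion_of_mem hm'J
  · rw [hMeval, Move.eval, hrefl', hparam']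

lemma exists_max_ext (Ω : Set Move) (hΩ : IsMoveEnsemble Ω)
    (hjoin : JoinClosed Ω) (m : Move) (hm : m ∈ Ω) :
    ∃ M ∈ MaxOf Ω, Move.le m M := by
  by_cases hne : m.dom.Nonempty
  · obtain ⟨M, hM, hle, _⟩ := exists_max_ext_ne Ω hΩ hjoin m hm hne
    exact ⟨M, hM, hle⟩
  · rw [Set.not_nonempty_iff_eq_empty] at hne
    by_cases hex : ∃ m₁ ∈ Ω, m₁.isRefl = m.isRefl ∧ m₁.dom.Nonempty
    · obtain ⟨m₁, hm₁, hr₁, hne₁⟩ := hex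
      obtain ⟨M, hM, _, hMr⟩ := exists_max_ext_ne Ω hΩ hjoin m₁ hm₁ hne₁
      exact ⟨M, hM, by rw [hMr, hr₁], by rw [hne]; exact Set.empty_subset _,
        fun x hx => by rw [hne] at hx; exact absurd hx (Set.notMem_empty x)⟩
    · push_neg at hex
      refine ⟨m, ⟨hm, fun m' hm' hle => ?_⟩, rfl, subset_rfl,
        fun _ _ => rfl⟩
      have : m'.dom = ∅ := hex m' hm' hle.1.symm
      exact ⟨hle.1.symm, by rw [this]; exact Set.empty_subset _,
        fun x hx => by rw [this] at hx; exact absurd hx (Set.notMem_empty x)⟩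

lemma restrict_of_le {Ω : Set Move} (hΩ : IsMoveEnsemble Ω) {m M : Move}
    (hm : m ∈ Ω) (hle : Move.le m M) :
    Move.mk' M.isRefl M.param m.dom = m := by
  obtain ⟨hr, hsub, hev⟩ := hle
  by_cases hd : m.dom = ∅
  · rw [hd, mk'_of_empty]
    obtain ⟨b, q, D⟩ := m
    simp only at hd hr ⊢
    have h0 : q = 0 := (hΩ _ hm).2 hd
    rw [hd, ← hr, h0]
  · obtain ⟨x0, hx0⟩ := Set.nonempty_iff_ne_empty.mpr hd
    have h := hev x0 hx0
    rw [Move.eval, Move.eval, hr] at h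
    have hpq : m.param = M.param := uEval_param_eq h
    rw [← hr, ← hpq, mk'_self m (fun h => absurd h hd)]

/-- A join-closed move ensemble is the restriction closure, and the joined
ensemble, of its set of maximal elements. -/
theorem joinClosed_presented_by_max (Ω : Set Move)
    (hΩ : IsMoveEnsemble Ω) (hjoin : JoinClosed Ω) :
    Ω = restrictCl (MaxOf Ω) ∧ Ω = joinCl (MaxOf Ω) := by
  have hmaxsub : MaxOf Ω ⊆ Ω := fun m hm => hm.1
  have hrsub : restrictCl (MaxOf Ω) ⊆ Ω :=
    Set.sInter_subset_of_mem ⟨hjoin.1, hmaxsub⟩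
  have hjsub : joinCl (MaxOf Ω) ⊆ Ω :=
    Set.sInter_subset_of_mem ⟨hjoin, hmaxsub⟩
  have key : ∀ S : Set Move, RestrictClosed S → MaxOf Ω ⊆ S → Ω ⊆ S := by
    intro S hS hsub m hmm
    obtain ⟨M, hM, hle⟩ := exists_max_ext Ω hΩ hjoin m hmm
    have h := hS M (hsub hM) m.dom hle.2.1 (hΩ m hmm).1
    rwa [restrict_of_le hΩ hmm hle] at h
  constructor
  · refine le_antisymm ?_ hrsub
    refine key _ ?_ (fun m hm Γ hΓ => hΓ.2 hm)
    intro m hm D' hsub hval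
    exact Set.mem_sInter.mpr fun Γ hΓ =>
      hΓ.1 m (Set.mem_sInter.mp hm Γ hΓ) D' hsub hval
  · refine le_antisymm ?_ hjsub
    refine key _ ?_ (fun m hm Γ hΓ => hΓ.2 hm)
    intro m hm D' hsub hval
    exact Set.mem_sInter.mpr fun Γ hΓ =>
      hΓ.1.1 m (Set.mem_sInter.mp hm Γ hΓ) D' hsub hval
end
end
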